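/- Hitting time to zero for the generalized ATO-POS system (Proposition B.1): assume δ := min_{x∈X, x≠0} (Σ_{i=1}^I μ_i(x)) − Σ_{i=1}^I λ_i > 0. Then the hitting time of the zero state from the full state C = (C_1,…,C_I), namely τ_0 = min{t ≥ 0 : g(C, u_1⋯u_t) = 0} (where g(x, w) denotes iterated application along the word w, u_1 first), satisfies E[τ_0] ≤ (Λ/δ)·Σ_{i=1}^I C_i. -/

import Mathlib

open MeasureTheory Finset ENNReal

namespace ATO

/-- Events for the generalized ATO-POS model: joint arrivals `d A` and abstract
service events drawn from a type `S`. -/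
inductive GEv (I : ℕ) (S : Type) where
  | d : Finset (Fin I) → GEv I S
  | s : S → GEv I S

instance (I : ℕ) (S : Type) : MeasurableSpace (GEv I S) := ⊤

/-- Iterated application of a transition function along a word (head applied first). -/
def iterL {σ E : Type*} (f : σ → E → σ) : σ → List E → σ
  | x, [] => x
  | x, a :: w => iterL f (f x a) w


section Aux

open scoped Classical in
/-- For a set `T` of naturals, the `ℝ≥0∞`-valued first element of `T` equals the
sum of the survival indicators. -/
lemma sInf_nat_eq_tsum (T : Set ℕ) :
    sInf {r : ℝ≥0∞ | ∃ t : ℕ, r = t ∧ t ∈ T}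
      = ∑' n : ℕ, if ∀ t ≤ n, t ∉ T then 1 else 0 := by
  by_cases hT : ∃ t, t ∈ T
  · set m := Nat.find hT with hm
    have hmem : m ∈ T := Nat.find_spec hT
    have hmin : ∀ t < m, t ∉ T := fun t ht => Nat.find_min hT ht
    have hL : sInf {r : ℝ≥0∞ | ∃ t : ℕ, r = t ∧ t ∈ T} = (m : ℝ≥0∞) := by
      apply le_antisymm
      · exact csInf_le (OrderBot.bddBelow _) ⟨m, rfl, hmem⟩
      · refine le_sInf ?_
        rintro r ⟨t, rfl, ht⟩
        exact_mod_cast Nat.cast_le.mpr (Nat.find_le ht)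
    have hcond : ∀ n : ℕ, (∀ t ≤ n, t ∉ T) ↔ n < m := by
      intro n
      constructor
      · intro h
        by_contra hn
        exact h m (le_of_not_gt hn) hmem
      · intro h t ht
        exact hmin t (lt_of_le_of_lt ht h)
    have hR : (∑' n : ℕ, if ∀ t ≤ n, t ∉ T then (1:ℝ≥0∞) else 0) = (m : ℝ≥0∞) := by
      have : ∀ n : ℕ, (if ∀ t ≤ n, t ∉ T then (1:ℝ≥0∞) else 0)
          = if n < m then 1 else 0 := by
        intro n; simp [hcond n]
      rw [tsum_congr this, tsum_eq_sum (s := Finset.range m)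
        (by intro n hn; simp [Finset.mem_range] at hn; simp [hn])]
      rw [Finset.sum_congr rfl (fun b hb => if_pos (Finset.mem_range.mp hb))]
      simp
    rw [hL, hR]
  · push_neg at hT
    have hL : {r : ℝ≥0∞ | ∃ t : ℕ, r = t ∧ t ∈ T} = ∅ := by
      ext r; simp only [Set.mem_setOf_eq, Set.mem_empty_iff_false, iff_false]
      rintro ⟨t, _, ht⟩; exact hT t ht
    rw [hL, sInf_empty]
    have : ∀ n : ℕ, (if ∀ t ≤ n, t ∉ T then (1:ℝ≥0∞) else 0) = 1 := by
      intro n; exact if_pos (fun t _ => hT t)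
    rw [tsum_congr this, tsum_const_eq_top_of_ne_zero one_ne_zero]

variable {I : ℕ} {S : Type}

def gevEquiv : GEv I S ≃ (Finset (Fin I)) ⊕ S where
  toFun := fun e => match e with | .d A => .inl A | .s s => .inr s
  invFun := fun e => match e with | .inl A => .d A | .inr s => .s s
  left_inv := by rintro (A|s) <;> rfl
  right_inv := by rintro (A|s) <;> rfl

instance [Fintype S] : Fintype (GEv I S) := Fintype.ofEquiv _ gevEquiv.symm

lemma gev_sum_split [Fintype S] {M : Type*} [AddCommMonoid M] (f : GEv I S → M) :
    ∑ e : GEv I S, f e = (∑ A : Finset (Fin I), f (.d A)) + ∑ s : S, f (.s s) := by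
  rw [← Equiv.sum_comp gevEquiv.symm f, Fintype.sum_sum_type]
  rfl

lemma pi_sum_split {E : Type} [Fintype E] {M : Type*} [AddCommMonoid M]
    (n : ℕ) (f : (Fin (n+1) → E) → M) :
    ∑ w : Fin (n+1) → E, f w = ∑ e : E, ∑ w : Fin n → E, f (Fin.cons e w) := by
  rw [← Equiv.sum_comp (Fin.consEquiv (fun _ : Fin (n+1) => E)) f, Fintype.sum_prod_type]
  rfl

/-- `alive x l` : all states along the path from `x` through `l`, including both
endpoints, are nonzero. -/
def alive (g : (Fin I → ℕ) → GEv I S → (Fin I → ℕ)) : (Fin I → ℕ) → List (GEv I S) → Prop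
  | x, [] => x ≠ 0
  | x, e :: w => x ≠ 0 ∧ alive g (g x e) w

lemma alive_iff (g : (Fin I → ℕ) → GEv I S → (Fin I → ℕ)) (x : Fin I → ℕ)
    (l : List (GEv I S)) :
    alive g x l ↔ ∀ t ≤ l.length, iterL g x (l.take t) ≠ 0 := by
  induction l generalizing x with
  | nil =>
      simp only [alive, List.length_nil, List.take_nil]
      constructor
      · intro h t _; simpa [iterL] using h
      · intro h; simpa [iterL] using h 0 (le_refl 0)
  | cons e w ih =>
      simp only [alive, ih]
      constructor
      · rintro ⟨hx, h⟩ t ht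
        cases t with
        | zero => simpa [iterL] using hx
        | succ s =>
            simp only [List.take_succ_cons, iterL]
            exact h s (by simpa using ht)
      · intro h
        refine ⟨by simpa [iterL] using h 0 (by simp), fun t ht => ?_⟩
        have := h (t+1) (by simpa using ht)
        simpa [List.take_succ_cons, iterL] using this

/-- Survival-probability recursion. -/
noncomputable def Pn (g : (Fin I → ℕ) → GEv I S → (Fin I → ℕ))
    (prob : GEv I S → ℝ≥0∞) [Fintype S] : ℕ → (Fin I → ℕ) → ℝ≥0∞
  | 0, x => if x = 0 then 0 else 1
  | n+1, x => if x = 0 then 0 else ∑ e : GEv I S, prob e * Pn g prob n (g x e)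

/-- Truncated Lyapunov recursion. -/
noncomputable def Bn (g : (Fin I → ℕ) → GEv I S → (Fin I → ℕ))
    (prob : GEv I S → ℝ≥0∞) [Fintype S] : ℕ → (Fin I → ℕ) → ℝ≥0∞
  | 0, x => if x = 0 then 0 else ∑ i, (x i : ℝ≥0∞)
  | n+1, x => if x = 0 then 0 else ∑ e : GEv I S, prob e * Bn g prob n (g x e)

lemma drift [Fintype S] (C : Fin I → ℕ)
    (g : (Fin I → ℕ) → GEv I S → (Fin I → ℕ))
    (hgd : ∀ (x : Fin I → ℕ) (A : Finset (Fin I)),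
        g x (.d A) = fun k => x k + if k ∈ A ∧ x k < C k then 1 else 0)
    (hserv : ∀ (s : S) (x : Fin I → ℕ), (∀ i, x i ≤ C i) →
        g x (.s s) = x ∨ ∃ i, 1 ≤ x i ∧ g x (.s s) = fun k => x k - if k = i then 1 else 0)
    (μ : Fin I → (Fin I → ℕ) → ℝ)
    (hμ0 : ∀ (i : Fin I) (x : Fin I → ℕ), (∀ k, x k ≤ C k) → x i = 0 → μ i x = 0)
    (hμnn : ∀ (i : Fin I) (x : Fin I → ℕ), (∀ k, x k ≤ C k) → 0 ≤ μ i x)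
    (lam : Finset (Fin I) → ℝ) (hlamnn : ∀ A, 0 ≤ lam A)
    (Λ : ℝ) (hΛpos : 0 < Λ)
    (prob : GEv I S → ℝ≥0∞)
    (hpd : ∀ A : Finset (Fin I), prob (.d A) = ENNReal.ofReal (lam A / Λ))
    (hps : ∀ (x : Fin I → ℕ), (∀ k, x k ≤ C k) → ∀ i : Fin I, 1 ≤ x i →
        (∑ s ∈ Finset.univ.filter
            (fun s : S => g x (.s s) = fun k => x k - if k = i then 1 else 0),
          prob (.s s)) = ENNReal.ofReal (μ i x / Λ))
    (mv δ : ℝ)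
    (hmv : IsLeast {v : ℝ | ∃ x : Fin I → ℕ, (∀ k, x k ≤ C k) ∧ x ≠ 0 ∧ v = ∑ i, μ i x} mv)
    (hδ : δ = mv - ∑ i : Fin I, ∑ A ∈ Finset.univ.filter (fun A => i ∈ A), lam A)
    (hδnn : 0 ≤ δ)
    (htot : ∑ e : GEv I S, prob e = 1)
    (x : Fin I → ℕ) (hx : ∀ k, x k ≤ C k) (hx0 : x ≠ 0) :
    (∑ e : GEv I S, prob e * ∑ i, ((g x e) i : ℝ≥0∞)) + ENNReal.ofReal (δ/Λ)
      ≤ ∑ i, (x i : ℝ≥0∞) := by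
  classical
  set V : (Fin I → ℕ) → ℝ≥0∞ := fun y => ∑ i, (y i : ℝ≥0∞) with hV
  set dsub : Fin I → (Fin I → ℕ) := fun i k => x k - if k = i then 1 else 0 with hdsub
  set I1 : Finset (Fin I) := Finset.univ.filter (fun i => 1 ≤ x i) with hI1
  set T0 : Finset S := Finset.univ.filter (fun s => g x (.s s) = x) with hT0
  set Ti : Fin I → Finset S := fun i => Finset.univ.filter (fun s => g x (.s s) = dsub i)
    with hTi
  -- basic facts about dsub
  have hdsub_ne : ∀ i ∈ I1, dsub i ≠ x := by
    intro i hi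
    have hxi : 1 ≤ x i := (Finset.mem_filter.mp hi).2
    intro h
    have := congrFun h i
    simp only [hdsub] at this
    simp at this
    omega
  have hdsub_inj : ∀ i ∈ I1, ∀ j ∈ I1, i ≠ j → dsub i ≠ dsub j := by
    intro i hi j hj hij h
    have hxi : 1 ≤ x i := (Finset.mem_filter.mp hi).2
    have := congrFun h i
    simp [hdsub, if_neg hij] at this
    omega
  -- decomposition of the sum over services
  have hdecomp : ∀ (f : S → ℝ≥0∞),
      ∑ s : S, f s = (∑ s ∈ T0, f s) + ∑ i ∈ I1, ∑ s ∈ Ti i, f s := by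
    intro f
    have hdisj : Disjoint T0 (I1.biUnion Ti) := by
      rw [Finset.disjoint_left]
      intro s hs hs'
      rcases Finset.mem_biUnion.mp hs' with ⟨i, hi, hsi⟩
      have h1 := (Finset.mem_filter.mp hs).2
      have h2 := (Finset.mem_filter.mp hsi).2
      exact hdsub_ne i hi (h2.symm.trans h1)
    have hcover : (Finset.univ : Finset S) = T0 ∪ I1.biUnion Ti := by
      ext s
      simp only [Finset.mem_univ, true_iff, Finset.mem_union, Finset.mem_biUnion]
      rcases hserv s x hx with h | ⟨i, hxi, h⟩
      · exact Or.inl (Finset.mem_filter.mpr ⟨Finset.mem_univ _, h⟩)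
      · exact Or.inr ⟨i, Finset.mem_filter.mpr ⟨Finset.mem_univ _, hxi⟩,
          Finset.mem_filter.mpr ⟨Finset.mem_univ _, h⟩⟩
    rw [show ∑ s : S, f s = ∑ s ∈ T0 ∪ I1.biUnion Ti, f s from by rw [← hcover],
      Finset.sum_union hdisj, Finset.sum_biUnion]
    intro i hi j hj hij
    simp only [Function.onFun]
    rw [Finset.disjoint_left]
    intro s hsi hsj
    have h1 := (Finset.mem_filter.mp hsi).2
    have h2 := (Finset.mem_filter.mp hsj).2
    exact hdsub_inj i (by simpa using hi) j (by simpa using hj) hij (h1.symm.trans h2)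
  -- value of V on decreased states
  have hVd : ∀ i ∈ I1, V (dsub i) + 1 = V x := by
    intro i hi
    have hxi : 1 ≤ x i := (Finset.mem_filter.mp hi).2
    have hnat : (∑ k, dsub i k) + 1 = ∑ k, x k := by
      have hk : ∀ k ∈ (Finset.univ : Finset (Fin I)),
          x k = dsub i k + (if k = i then 1 else 0) := by
        intro k _
        by_cases hk : k = i
        · subst hk; simp [hdsub]; omega
        · simp [hdsub, hk]
      rw [Finset.sum_congr rfl hk, Finset.sum_add_distrib, Finset.sum_ite_eq' Finset.univ i
        (fun _ => 1)]
      simp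
    have := congrArg (fun n : ℕ => (n : ℝ≥0∞)) hnat
    push_cast at this
    simpa [hV] using this
  show (∑ e : GEv I S, prob e * V (g x e)) + ENNReal.ofReal (δ/Λ) ≤ V x
  -- arrival bound
  have hDA : ∀ A : Finset (Fin I), V (g x (.d A)) ≤ V x + A.card := by
    intro A
    rw [hgd]
    simp only [hV]
    push_cast
    rw [Finset.sum_add_distrib]
    refine add_le_add le_rfl ?_
    calc ∑ k, (if k ∈ A ∧ x k < C k then (1:ℝ≥0∞) else 0)
        ≤ ∑ k, (if k ∈ A then (1:ℝ≥0∞) else 0) := by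
          refine Finset.sum_le_sum ?_
          intro k _
          split_ifs with h1 h2 <;> simp_all
      _ = A.card := by
          rw [Finset.sum_ite_mem]
          simp
  -- the filters in `hps` are the `Ti`
  have hTieq : ∀ i, Ti i
      = Finset.univ.filter (fun s => g x (.s s) = fun k => x k - if k = i then 1 else 0) := by
    intro i
    simp only [hTi, hdsub]
  set m : ℝ≥0∞ := ∑ i ∈ I1, ENNReal.ofReal (μ i x / Λ) with hm
  have hmne : m ≠ ⊤ := by
    rw [hm]
    exact (ENNReal.sum_lt_top.mpr (fun i _ => ENNReal.ofReal_lt_top)).ne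
  -- service sum identity
  have hSsum : (∑ s : S, prob (.s s) * V (g x (.s s)))
      = (∑ s ∈ T0, prob (.s s)) * V x
        + ∑ i ∈ I1, ENNReal.ofReal (μ i x / Λ) * V (dsub i) := by
    rw [hdecomp (fun s => prob (.s s) * V (g x (.s s)))]
    congr 1
    · rw [Finset.sum_mul]
      refine Finset.sum_congr rfl (fun s hs => ?_)
      rw [(Finset.mem_filter.mp hs).2]
    · refine Finset.sum_congr rfl (fun i hi => ?_)
      rw [← hps x hx i (Finset.mem_filter.mp hi).2, ← hTieq i, Finset.sum_mul]
      refine Finset.sum_congr rfl (fun s hs => ?_)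
      rw [(Finset.mem_filter.mp hs).2]
  -- total service probability decomposition
  have htots : (∑ s : S, prob (.s s)) = (∑ s ∈ T0, prob (.s s)) + m := by
    rw [hdecomp (fun s => prob (.s s)), hm]
    congr 1
    refine Finset.sum_congr rfl (fun i hi => ?_)
    rw [← hps x hx i (Finset.mem_filter.mp hi).2, ← hTieq i]
  -- real-valued inequality
  have hreal : (∑ A : Finset (Fin I), (lam A / Λ) * A.card) + δ/Λ ≤ ∑ i ∈ I1, μ i x / Λ := by
    have h2 : ∑ i ∈ I1, μ i x = ∑ i, μ i x := by
      refine Finset.sum_subset (Finset.subset_univ _) (fun i _ hi => ?_)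
      simp only [hI1, Finset.mem_filter, Finset.mem_univ, true_and, not_le,
        Nat.lt_one_iff] at hi
      exact hμ0 i x hx hi
    have h3 : mv ≤ ∑ i, μ i x := hmv.2 ⟨x, hx, hx0, rfl⟩
    have h4 : ∑ A : Finset (Fin I), lam A * A.card
        = ∑ i : Fin I, ∑ A ∈ Finset.univ.filter (fun A => i ∈ A), lam A := by
      have : ∀ A : Finset (Fin I), lam A * A.card = ∑ _i ∈ A, lam A := by
        intro A
        rw [Finset.sum_const, nsmul_eq_mul, mul_comm]
      rw [Finset.sum_congr rfl (fun A _ => this A)]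
      refine Finset.sum_comm' ?_
      intro A i
      simp
    have key : (∑ A : Finset (Fin I), lam A * A.card) + δ ≤ ∑ i ∈ I1, μ i x := by
      rw [h4, h2, hδ]
      linarith
    calc (∑ A : Finset (Fin I), (lam A / Λ) * A.card) + δ/Λ
        = ((∑ A : Finset (Fin I), lam A * A.card) + δ)/Λ := by
          rw [add_div, Finset.sum_div]
          congr 1
          refine Finset.sum_congr rfl (fun A _ => ?_)
          ring
      _ ≤ (∑ i ∈ I1, μ i x)/Λ := by
          apply div_le_div_of_nonneg_right key hΛpos.le |>.trans_eq rfl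
      _ = ∑ i ∈ I1, μ i x / Λ := by rw [Finset.sum_div]
  -- ENNReal version of the rate inequality
  have hEreal : (∑ A : Finset (Fin I), prob (.d A) * (A.card : ℝ≥0∞))
      + ENNReal.ofReal (δ/Λ) ≤ m := by
    have e1 : ∀ A : Finset (Fin I), prob (.d A) * (A.card : ℝ≥0∞)
        = ENNReal.ofReal ((lam A / Λ) * A.card) := by
      intro A
      rw [hpd A, ← ENNReal.ofReal_natCast A.card,
        ← ENNReal.ofReal_mul (div_nonneg (hlamnn A) hΛpos.le)]
    rw [Finset.sum_congr rfl (fun A _ => e1 A),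
      ← ENNReal.ofReal_sum_of_nonneg
        (fun A _ => mul_nonneg (div_nonneg (hlamnn A) hΛpos.le) (Nat.cast_nonneg _)),
      ← ENNReal.ofReal_add
        (Finset.sum_nonneg
          (fun A _ => mul_nonneg (div_nonneg (hlamnn A) hΛpos.le) (Nat.cast_nonneg _)))
        (div_nonneg hδnn hΛpos.le), hm,
      ← ENNReal.ofReal_sum_of_nonneg (fun i _ => div_nonneg (hμnn i x hx) hΛpos.le)]
    exact ENNReal.ofReal_le_ofReal hreal
  -- combine
  have hsplit := gev_sum_split (fun e => prob e * V (g x e))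
  have hone : (∑ A : Finset (Fin I), prob (.d A)) + (∑ s : S, prob (.s s)) = 1 := by
    rw [← gev_sum_split prob]; exact htot
  have hD : (∑ A : Finset (Fin I), prob (.d A) * V (g x (.d A)))
      ≤ (∑ A : Finset (Fin I), prob (.d A)) * V x
        + ∑ A : Finset (Fin I), prob (.d A) * (A.card : ℝ≥0∞) := by
    rw [Finset.sum_mul, ← Finset.sum_add_distrib]
    refine Finset.sum_le_sum (fun A _ => ?_)
    rw [← mul_add]
    exact mul_le_mul_right (hDA A) _
  have hSm : (∑ s : S, prob (.s s) * V (g x (.s s))) + m = (∑ s : S, prob (.s s)) * V x := by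
    rw [hSsum, hm, add_assoc, ← Finset.sum_add_distrib]
    have hper : ∀ i ∈ I1,
        ENNReal.ofReal (μ i x / Λ) * V (dsub i) + ENNReal.ofReal (μ i x / Λ)
          = ENNReal.ofReal (μ i x / Λ) * V x := by
      intro i hi
      rw [← mul_add_one, hVd i hi]
    rw [Finset.sum_congr rfl hper, ← Finset.sum_mul, htots, add_mul]
  have hcancel : (∑ e : GEv I S, prob e * V (g x e)) + ENNReal.ofReal (δ/Λ) + m
      ≤ V x + m := by
    calc (∑ e : GEv I S, prob e * V (g x e)) + ENNReal.ofReal (δ/Λ) + m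
        = (∑ A : Finset (Fin I), prob (.d A) * V (g x (.d A)))
          + ((∑ s : S, prob (.s s) * V (g x (.s s))) + m) + ENNReal.ofReal (δ/Λ) := by
          rw [hsplit]; ring
      _ = (∑ A : Finset (Fin I), prob (.d A) * V (g x (.d A)))
          + (∑ s : S, prob (.s s)) * V x + ENNReal.ofReal (δ/Λ) := by rw [hSm]
      _ ≤ ((∑ A : Finset (Fin I), prob (.d A)) * V x
            + ∑ A : Finset (Fin I), prob (.d A) * (A.card : ℝ≥0∞))
          + (∑ s : S, prob (.s s)) * V x + ENNReal.ofReal (δ/Λ) := by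
          exact add_le_add (add_le_add hD le_rfl) le_rfl
      _ = ((∑ A : Finset (Fin I), prob (.d A)) + (∑ s : S, prob (.s s))) * V x
          + ((∑ A : Finset (Fin I), prob (.d A) * (A.card : ℝ≥0∞))
            + ENNReal.ofReal (δ/Λ)) := by ring
      _ ≤ 1 * V x + m := add_le_add (by rw [hone]) hEreal
      _ = V x + m := by rw [one_mul]
  exact (ENNReal.add_le_add_iff_right hmne).mp hcancel

lemma invariant [Fintype S] (C : Fin I → ℕ)
    (g : (Fin I → ℕ) → GEv I S → (Fin I → ℕ))
    (hgd : ∀ (x : Fin I → ℕ) (A : Finset (Fin I)),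
        g x (.d A) = fun k => x k + if k ∈ A ∧ x k < C k then 1 else 0)
    (hserv : ∀ (s : S) (x : Fin I → ℕ), (∀ i, x i ≤ C i) →
        g x (.s s) = x ∨ ∃ i, 1 ≤ x i ∧ g x (.s s) = fun k => x k - if k = i then 1 else 0)
    (x : Fin I → ℕ) (hx : ∀ k, x k ≤ C k) (e : GEv I S) :
    ∀ k, g x e k ≤ C k := by
  cases e with
  | d A =>
      intro k
      rw [hgd]
      dsimp only
      split_ifs with h
      · omega
      · exact hx k
  | s s =>
      rcases hserv s x hx with h | ⟨i, _, h⟩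
      · rw [h]; exact hx
      · rw [h]
        intro k
        dsimp only
        exact le_trans (Nat.sub_le _ _) (hx k)

lemma step [Fintype S] (C : Fin I → ℕ)
    (g : (Fin I → ℕ) → GEv I S → (Fin I → ℕ)) (prob : GEv I S → ℝ≥0∞)
    (hinv : ∀ x : Fin I → ℕ, (∀ k, x k ≤ C k) → ∀ e, ∀ k, g x e k ≤ C k)
    (c : ℝ≥0∞)
    (hdrift : ∀ x : Fin I → ℕ, (∀ k, x k ≤ C k) → x ≠ 0 →
        (∑ e : GEv I S, prob e * ∑ i, ((g x e) i : ℝ≥0∞)) + c ≤ ∑ i, (x i : ℝ≥0∞)) :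
    ∀ (n : ℕ) (x : Fin I → ℕ), (∀ k, x k ≤ C k) →
      Bn g prob (n+1) x + c * Pn g prob n x ≤ Bn g prob n x := by
  intro n
  induction n with
  | zero =>
      intro x hx
      by_cases h0 : x = 0
      · simp [Bn, Pn, h0]
      · simp only [Bn, Pn, if_neg h0]
        have hb : ∀ y : Fin I → ℕ, (if y = 0 then 0 else ∑ i, (y i : ℝ≥0∞))
            ≤ ∑ i, (y i : ℝ≥0∞) := by
          intro y; split <;> simp
        calc (∑ e : GEv I S, prob e * if g x e = 0 then 0 else ∑ i, ((g x e) i : ℝ≥0∞))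
              + c * 1
            ≤ (∑ e : GEv I S, prob e * ∑ i, ((g x e) i : ℝ≥0∞)) + c := by
              rw [mul_one]
              exact add_le_add (Finset.sum_le_sum
                (fun e _ => mul_le_mul_right (hb _) _)) le_rfl
          _ ≤ ∑ i, (x i : ℝ≥0∞) := hdrift x hx h0
  | succ n ih =>
      intro x hx
      by_cases h0 : x = 0
      · simp [Bn, Pn, h0]
      · simp only [Bn, Pn, if_neg h0]
        calc (∑ e : GEv I S, prob e * Bn g prob (n+1) (g x e))
              + c * ∑ e : GEv I S, prob e * Pn g prob n (g x e)
            = ∑ e : GEv I S, prob e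
                * (Bn g prob (n+1) (g x e) + c * Pn g prob n (g x e)) := by
              rw [Finset.mul_sum, ← Finset.sum_add_distrib]
              refine Finset.sum_congr rfl (fun e _ => ?_)
              ring
          _ ≤ ∑ e : GEv I S, prob e * Bn g prob n (g x e) :=
              Finset.sum_le_sum (fun e _ =>
                mul_le_mul_right (ih (g x e) (hinv x hx e)) _)

lemma telescope [Fintype S] (C : Fin I → ℕ)
    (g : (Fin I → ℕ) → GEv I S → (Fin I → ℕ)) (prob : GEv I S → ℝ≥0∞)
    (c : ℝ≥0∞) (x : Fin I → ℕ) (hx : ∀ k, x k ≤ C k)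
    (hstep : ∀ (n : ℕ) (y : Fin I → ℕ), (∀ k, y k ≤ C k) →
      Bn g prob (n+1) y + c * Pn g prob n y ≤ Bn g prob n y) :
    ∀ N : ℕ, Bn g prob N x + c * ∑ n ∈ Finset.range N, Pn g prob n x ≤ Bn g prob 0 x := by
  intro N
  induction N with
  | zero => simp
  | succ N ih =>
      calc Bn g prob (N+1) x + c * ∑ n ∈ Finset.range (N+1), Pn g prob n x
          = (Bn g prob (N+1) x + c * Pn g prob N x)
            + c * ∑ n ∈ Finset.range N, Pn g prob n x := by
            rw [Finset.sum_range_succ]; ring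
        _ ≤ Bn g prob N x + c * ∑ n ∈ Finset.range N, Pn g prob n x :=
            add_le_add (hstep N x hx) le_rfl
        _ ≤ Bn g prob 0 x := ih

open scoped Classical in
lemma Pn_eq_sum_words [Fintype S]
    (g : (Fin I → ℕ) → GEv I S → (Fin I → ℕ)) (prob : GEv I S → ℝ≥0∞) :
    ∀ (n : ℕ) (x : Fin I → ℕ),
      (∑ w : Fin n → GEv I S,
        (∏ j, prob (w j)) * (if alive g x (List.ofFn w) then 1 else 0))
        = Pn g prob n x := by
  intro n
  induction n with
  | zero =>
      intro x
      by_cases h : x = 0 <;> simp [Fintype.sum_unique, alive, Pn, h]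
  | succ n ih =>
      intro x
      rw [pi_sum_split n
        (fun w => (∏ j, prob (w j)) * (if alive g x (List.ofFn w) then 1 else 0))]
      by_cases h0 : x = 0
      · simp [Pn, h0, alive, List.ofFn_succ]
      · simp only [Pn, if_neg h0]
        refine Finset.sum_congr rfl (fun e _ => ?_)
        rw [← ih (g x e), Finset.mul_sum]
        refine Finset.sum_congr rfl (fun w _ => ?_)
        rw [Fin.prod_univ_succ]
        simp only [Fin.cons_zero, Fin.cons_succ, List.ofFn_succ]
        have hiff : alive g x (e :: List.ofFn w) ↔ alive g (g x e) (List.ofFn w) := by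
          simp [alive, h0]
        rw [if_congr hiff rfl rfl]
        ring

lemma ofFn_val (n : ℕ) {α : Type} (h : ℕ → α) :
    List.ofFn (fun j : Fin n => h j) = (List.range n).map h := by
  apply List.ext_getElem <;> simp

open scoped Classical in
lemma measure_alive [Fintype S]
    (g : (Fin I → ℕ) → GEv I S → (Fin I → ℕ)) (prob : GEv I S → ℝ≥0∞)
    (P : Measure (ℕ → GEv I S))
    (hiid : ∀ (T : Finset ℕ) (u : ℕ → GEv I S),
        P {ω | ∀ t ∈ T, ω t = u t} = ∏ t ∈ T, prob (u t))
    (x : Fin I → ℕ) (n : ℕ) :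
    P {ω | alive g x ((List.range n).map fun s => ω (s + 1))} = Pn g prob n x := by
  set cyl : (Fin n → GEv I S) → Set (ℕ → GEv I S) :=
    fun w => {ω | ∀ j : Fin n, ω ((j : ℕ) + 1) = w j} with hcyl
  have hcylmeas : ∀ w, MeasurableSet (cyl w) := by
    intro w
    have : cyl w = ⋂ j : Fin n, (fun ω : ℕ → GEv I S => ω ((j : ℕ) + 1)) ⁻¹' {w j} := by
      ext ω; simp [hcyl, Set.mem_iInter]
    rw [this]
    exact MeasurableSet.iInter (fun j => measurable_pi_apply _ trivial)
  have hcylP : ∀ w, P (cyl w) = ∏ j, prob (w j) := by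
    intro w
    set u : ℕ → GEv I S := fun t => if h : t - 1 < n then w ⟨t - 1, h⟩ else .d ∅ with hu
    set T : Finset ℕ := Finset.image (fun t => t + 1) (Finset.range n) with hT
    have hset : {ω | ∀ t ∈ T, ω t = u t} = cyl w := by
      ext ω
      simp only [Set.mem_setOf_eq, hcyl, hT, Finset.mem_image, Finset.mem_range]
      constructor
      · intro h j
        have := h ((j : ℕ) + 1) ⟨j, j.2, rfl⟩
        rw [this, hu]
        simp
      · rintro h t ⟨s, hs, rfl⟩
        rw [h ⟨s, hs⟩, hu]
        simp [hs]
    have huw : ∀ j : Fin n, u ((j : ℕ) + 1) = w j := by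
      intro j
      rw [hu]
      simp
    rw [← hset, hiid T u, hT, Finset.prod_image (fun a _ b _ h => by omega)]
    rw [← Fin.prod_univ_eq_prod_range (fun s => prob (u (s + 1))) n]
    exact Finset.prod_congr rfl (fun j _ => by rw [huw j])
  set good : Finset (Fin n → GEv I S) :=
    Finset.univ.filter (fun w => alive g x (List.ofFn w)) with hgood
  have hev : {ω | alive g x ((List.range n).map fun s => ω (s + 1))}
      = ⋃ w ∈ good, cyl w := by
    ext ω
    simp only [Set.mem_setOf_eq, Set.mem_iUnion, exists_prop]
    constructor
    · intro h
      refine ⟨fun j => ω ((j : ℕ) + 1), ?_, fun j => rfl⟩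
      rw [hgood, Finset.mem_filter]
      exact ⟨Finset.mem_univ _, by rwa [ofFn_val n (fun s => ω (s + 1))]⟩
    · rintro ⟨w, hwg, hw⟩
      have : (fun j : Fin n => ω ((j : ℕ) + 1)) = w := funext hw
      have halive := (Finset.mem_filter.mp (hgood ▸ hwg)).2
      rwa [← this, ofFn_val n (fun s => ω (s + 1))] at halive
  have hdisj : (good : Set (Fin n → GEv I S)).PairwiseDisjoint cyl := by
    intro w _ w' _ hne
    refine Set.disjoint_left.mpr (fun ω hw hw' => hne ?_)
    exact funext (fun j => (hw j).symm.trans (hw' j))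
  rw [hev, measure_biUnion_finset hdisj (fun w _ => hcylmeas w),
    Finset.sum_congr rfl (fun w _ => hcylP w)]
  rw [← Pn_eq_sum_words g prob n x, hgood, Finset.sum_filter]
  refine Finset.sum_congr rfl (fun w _ => ?_)
  split <;> simp

end Aux

/-- Proposition B.1: hitting time to zero for the generalized ATO-POS system with
monotone state-dependent services. -/
theorem stmt17 (I : ℕ) (hI : 1 ≤ I) (C : Fin I → ℕ) (hC : ∀ i, 1 ≤ C i)
    (S : Type) [Fintype S]
    (g : (Fin I → ℕ) → GEv I S → (Fin I → ℕ))
    -- arrivals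
    (hgd : ∀ (x : Fin I → ℕ) (A : Finset (Fin I)),
        g x (.d A) = fun k => x k + if k ∈ A ∧ x k < C k then 1 else 0)
    -- services are monotone on `X`
    (hmono : ∀ (s : S) (x y : Fin I → ℕ), (∀ i, x i ≤ C i) → (∀ i, y i ≤ C i) →
        x ≤ y → g x (.s s) ≤ g y (.s s))
    -- each service either does nothing or removes one item of some type
    (hserv : ∀ (s : S) (x : Fin I → ℕ), (∀ i, x i ≤ C i) →
        g x (.s s) = x ∨ ∃ i, 1 ≤ x i ∧ g x (.s s) = fun k => x k - if k = i then 1 else 0)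
    -- service rates
    (μ : Fin I → (Fin I → ℕ) → ℝ)
    (hμ0 : ∀ (i : Fin I) (x : Fin I → ℕ), (∀ k, x k ≤ C k) → x i = 0 → μ i x = 0)
    (hμnn : ∀ (i : Fin I) (x : Fin I → ℕ), (∀ k, x k ≤ C k) → 0 ≤ μ i x)
    (νm : Fin I → ℝ) (hνm : ∀ i, IsGreatest ((μ i) '' {x | ∀ k, x k ≤ C k}) (νm i))
    -- arrival rates and the uniformization constant
    (lam : Finset (Fin I) → ℝ) (hlamnn : ∀ A, 0 ≤ lam A) (hlam0 : lam ∅ = 0)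
    (Λ : ℝ) (hΛ : Λ = (∑ A : Finset (Fin I), lam A) + ∑ i, νm i) (hΛpos : 0 < Λ)
    -- the distribution `ν` on events
    (prob : GEv I S → ℝ≥0∞)
    (hpd : ∀ A : Finset (Fin I), prob (.d A) = ENNReal.ofReal (lam A / Λ))
    (hps : ∀ (x : Fin I → ℕ), (∀ k, x k ≤ C k) → ∀ i : Fin I, 1 ≤ x i →
        (∑ s ∈ Finset.univ.filter
            (fun s : S => g x (.s s) = fun k => x k - if k = i then 1 else 0),
          prob (.s s)) = ENNReal.ofReal (μ i x / Λ))
    -- i.i.d. events with law `ν`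
    (P : Measure (ℕ → GEv I S)) [IsProbabilityMeasure P]
    (hiid : ∀ (T : Finset ℕ) (u : ℕ → GEv I S),
        P {ω | ∀ t ∈ T, ω t = u t} = ∏ t ∈ T, prob (u t))
    -- drift condition
    (mv δ : ℝ)
    (hmv : IsLeast {v : ℝ | ∃ x : Fin I → ℕ, (∀ k, x k ≤ C k) ∧ x ≠ 0 ∧ v = ∑ i, μ i x} mv)
    (hδ : δ = mv - ∑ i : Fin I, ∑ A ∈ Finset.univ.filter (fun A => i ∈ A), lam A)
    (hδpos : 0 < δ) :
    ∫⁻ ω, sInf {r : ℝ≥0∞ | ∃ t : ℕ, r = t ∧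
        iterL g (fun i => C i) ((List.range t).map fun s => ω (s + 1)) = 0} ∂P
      ≤ ENNReal.ofReal (Λ / δ * ∑ i, (C i : ℝ)) := by
  classical
  -- total probability one
  have htot : ∑ e : GEv I S, prob e = 1 := by
    have h1 : ∀ e : GEv I S, P {ω | ω 0 = e} = prob e := by
      intro e
      have := hiid {0} (fun _ => e)
      simpa using this
    have hdisj : ((Finset.univ : Finset (GEv I S)) : Set (GEv I S)).PairwiseDisjoint
        (fun e => {ω : ℕ → GEv I S | ω 0 = e}) := by
      intro a _ b _ hab
      exact Set.disjoint_left.mpr (fun ω h h' => hab (h ▸ h' ▸ rfl))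
    have hmeas : ∀ e : GEv I S, MeasurableSet {ω : ℕ → GEv I S | ω 0 = e} := by
      intro e
      have : {ω : ℕ → GEv I S | ω 0 = e} = (fun ω : ℕ → GEv I S => ω 0) ⁻¹' {e} := rfl
      rw [this]
      exact measurable_pi_apply 0 trivial
    have huniv : (Set.univ : Set (ℕ → GEv I S))
        = ⋃ e ∈ (Finset.univ : Finset (GEv I S)), {ω : ℕ → GEv I S | ω 0 = e} := by
      ext ω; simp
    have := measure_biUnion_finset (μ := P) hdisj (fun e _ => hmeas e)
    rw [← huniv, measure_univ] at this
    rw [← Finset.sum_congr rfl (fun e _ => h1 e), ← this]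
  -- basic facts about the full state
  have hCX : ∀ k, (fun i => C i) k ≤ C k := fun k => le_refl _
  have hCne : (fun i => C i) ≠ (0 : Fin I → ℕ) := by
    intro h
    have h0 : (0:ℕ) < I := hI
    have := congrFun h ⟨0, h0⟩
    simp only [Pi.zero_apply] at this
    have := hC ⟨0, h0⟩
    omega
  set c : ℝ≥0∞ := ENNReal.ofReal (δ / Λ) with hc
  have hδΛ : 0 < δ / Λ := div_pos hδpos hΛpos
  have hcne0 : c ≠ 0 := by
    rw [hc]
    simpa using hδΛ
  have hcnetop : c ≠ ⊤ := ENNReal.ofReal_ne_top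
  -- drift and recursion
  have hinv := invariant C g hgd hserv
  have hdrift : ∀ x : Fin I → ℕ, (∀ k, x k ≤ C k) → x ≠ 0 →
      (∑ e : GEv I S, prob e * ∑ i, ((g x e) i : ℝ≥0∞)) + c ≤ ∑ i, (x i : ℝ≥0∞) :=
    fun x hx hx0 => drift C g hgd hserv μ hμ0 hμnn lam hlamnn Λ hΛpos prob hpd hps
      mv δ hmv hδ hδpos.le htot x hx hx0
  have hstep := step C g prob hinv c hdrift
  have htel := telescope C g prob c (fun i => C i) hCX hstep
  have hB0 : Bn g prob 0 (fun i => C i) = ∑ i, (C i : ℝ≥0∞) := by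
    simp [Bn, hCne]
  -- partial-sum bound
  have hpartial : ∀ N : ℕ,
      c * ∑ n ∈ Finset.range N, Pn g prob n (fun i => C i) ≤ ∑ i, (C i : ℝ≥0∞) := by
    intro N
    calc c * ∑ n ∈ Finset.range N, Pn g prob n (fun i => C i)
        ≤ Bn g prob N (fun i => C i)
          + c * ∑ n ∈ Finset.range N, Pn g prob n (fun i => C i) := le_add_self
      _ ≤ Bn g prob 0 (fun i => C i) := htel N
      _ = ∑ i, (C i : ℝ≥0∞) := hB0
  -- tsum bound
  have hts : c * ∑' n : ℕ, Pn g prob n (fun i => C i) ≤ ∑ i, (C i : ℝ≥0∞) := by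
    rw [ENNReal.tsum_eq_iSup_sum, ENNReal.mul_iSup]
    refine iSup_le (fun s => ?_)
    obtain ⟨N, hN⟩ := Finset.exists_nat_subset_range s
    calc c * ∑ n ∈ s, Pn g prob n (fun i => C i)
        ≤ c * ∑ n ∈ Finset.range N, Pn g prob n (fun i => C i) :=
          mul_le_mul_right (Finset.sum_le_sum_of_subset hN) _
      _ ≤ ∑ i, (C i : ℝ≥0∞) := hpartial N
  have htsum : ∑' n : ℕ, Pn g prob n (fun i => C i) ≤ (∑ i, (C i : ℝ≥0∞)) / c :=
    (ENNReal.le_div_iff_mul_le (Or.inl hcne0) (Or.inl hcnetop)).mpr (by rwa [mul_comm])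
  -- event measurability
  have hmeasev : ∀ n : ℕ, MeasurableSet
      {ω : ℕ → GEv I S | alive g (fun i => C i) ((List.range n).map fun s => ω (s + 1))} := by
    intro n
    have hrw : {ω : ℕ → GEv I S | alive g (fun i => C i)
        ((List.range n).map fun s => ω (s + 1))}
        = ⋃ w ∈ (Finset.univ.filter
              (fun w : Fin n → GEv I S => alive g (fun i => C i) (List.ofFn w))),
            {ω : ℕ → GEv I S | ∀ j : Fin n, ω ((j : ℕ) + 1) = w j} := by
      ext ω
      simp only [Set.mem_setOf_eq, Set.mem_iUnion, exists_prop]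
      constructor
      · intro h
        refine ⟨fun j => ω ((j : ℕ) + 1), ?_, fun j => rfl⟩
        rw [Finset.mem_filter]
        exact ⟨Finset.mem_univ _, by
          rwa [ofFn_val n (fun s => ω (s + 1))]⟩
      · rintro ⟨w, hwg, hw⟩
        have hfun : (fun j : Fin n => ω ((j : ℕ) + 1)) = w := funext hw
        have halive := (Finset.mem_filter.mp hwg).2
        rwa [← hfun, ofFn_val n (fun s => ω (s + 1))] at halive
    rw [hrw]
    refine MeasurableSet.biUnion (Finset.countable_toSet _) (fun w _ => ?_)
    have : {ω : ℕ → GEv I S | ∀ j : Fin n, ω ((j : ℕ) + 1) = w j}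
        = ⋂ j : Fin n, (fun ω : ℕ → GEv I S => ω ((j : ℕ) + 1)) ⁻¹' {w j} := by
      ext ω; simp [Set.mem_iInter]
    rw [this]
    exact MeasurableSet.iInter (fun j => measurable_pi_apply _ trivial)
  -- pointwise identity for the hitting time
  have hpt : ∀ ω : ℕ → GEv I S,
      sInf {r : ℝ≥0∞ | ∃ t : ℕ, r = t ∧
        iterL g (fun i => C i) ((List.range t).map fun s => ω (s + 1)) = 0}
      = ∑' n : ℕ, Set.indicator
          {ω' : ℕ → GEv I S | alive g (fun i => C i)
            ((List.range n).map fun s => ω' (s + 1))} (fun _ => 1) ω := by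
    intro ω
    refine (sInf_nat_eq_tsum
      {t : ℕ | iterL g (fun i => C i) ((List.range t).map fun s => ω (s + 1)) = 0}).trans ?_
    refine tsum_congr (fun n => ?_)
    have hcond : (∀ t ≤ n, t ∉
        {t : ℕ | iterL g (fun i => C i) ((List.range t).map fun s => ω (s + 1)) = 0})
        ↔ alive g (fun i => C i) ((List.range n).map fun s => ω (s + 1)) := by
      rw [alive_iff]
      have hlen : ((List.range n).map fun s => ω (s + 1)).length = n := by simp
      rw [hlen]
      refine forall_congr' (fun t => ?_)
      refine imp_congr_right (fun ht => ?_)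
      have htake : ((List.range n).map fun s => ω (s + 1)).take t
          = (List.range t).map fun s => ω (s + 1) := by
        rw [← List.map_take, List.take_range, min_eq_left ht]
      rw [htake]
      simp [Set.mem_setOf_eq]
    rw [Set.indicator_apply]
    by_cases h : alive g (fun i => C i) ((List.range n).map fun s => ω (s + 1))
    · rw [if_pos (hcond.mpr h), if_pos (show ω ∈ _ from h)]
    · rw [if_neg (fun hh => h (hcond.mp hh)), if_neg (show ω ∉ _ from h)]
  -- final computation
  calc ∫⁻ ω, sInf {r : ℝ≥0∞ | ∃ t : ℕ, r = t ∧
        iterL g (fun i => C i) ((List.range t).map fun s => ω (s + 1)) = 0} ∂P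
      = ∫⁻ ω, ∑' n : ℕ, Set.indicator
          {ω' : ℕ → GEv I S | alive g (fun i => C i)
            ((List.range n).map fun s => ω' (s + 1))} (fun _ => 1) ω ∂P :=
        lintegral_congr hpt
    _ = ∑' n : ℕ, ∫⁻ ω, Set.indicator
          {ω' : ℕ → GEv I S | alive g (fun i => C i)
            ((List.range n).map fun s => ω' (s + 1))} (fun _ => 1) ω ∂P :=
        lintegral_tsum (fun n =>
          ((measurable_const.indicator (hmeasev n))).aemeasurable)
    _ = ∑' n : ℕ, P {ω' : ℕ → GEv I S | alive g (fun i => C i)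
          ((List.range n).map fun s => ω' (s + 1))} := by
        refine tsum_congr (fun n => ?_)
        exact lintegral_indicator_one (hmeasev n)
    _ = ∑' n : ℕ, Pn g prob n (fun i => C i) := by
        refine tsum_congr (fun n => ?_)
        exact measure_alive g prob P hiid (fun i => C i) n
    _ ≤ (∑ i, (C i : ℝ≥0∞)) / c := htsum
    _ = ENNReal.ofReal (Λ / δ * ∑ i, (C i : ℝ)) := by
        have h1 : (∑ i, (C i : ℝ≥0∞)) = ENNReal.ofReal (∑ i, (C i : ℝ)) := by
          rw [ENNReal.ofReal_sum_of_nonneg (fun i _ => Nat.cast_nonneg _)]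
          exact Finset.sum_congr rfl (fun i _ => (ENNReal.ofReal_natCast _).symm)
        rw [h1, hc, ← ENNReal.ofReal_div_of_pos hδΛ]
        congr 1
        field_simp

end ATO
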